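/- Let P : ℂ → ℂ be a monic polynomial of degree D ≥ 2 and let G(z) := lim_{n→∞} D^{-n} · log⁺ |P^{∘n}(z)| be its Green's function. Then G is continuous on ℂ. -/

import Mathlib

open Filter Topology

private lemma logplus_eq (t : ℝ) (ht : 0 ≤ t) :
    max (Real.log t) 0 = Real.log (max t 1) := by
  rcases le_or_gt t 1 with h | h
  · rw [max_eq_right (Real.log_nonpos ht h), max_eq_right h, Real.log_one]
  · rw [max_eq_left (Real.log_nonneg h.le), max_eq_left h.le]

private lemma key_estimate (D : ℕ) (hD : 2 ≤ D) (P : Polynomial ℂ)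
    (hmonic : P.Monic) (hdeg : P.natDegree = D) :
    ∃ C : ℝ, 0 ≤ C ∧ ∀ w : ℂ,
      |max (Real.log (‖P.eval w‖)) 0
        - (D : ℝ) * max (Real.log (‖w‖)) 0| ≤ C := by
  set T : ℝ := ∑ i ∈ Finset.range D, ‖P.coeff i‖ with hT
  have hT0 : 0 ≤ T := Finset.sum_nonneg fun i _ => (norm_nonneg _)
  set S : ℝ := T + 1 with hS
  have hS1 : 1 ≤ S := by simp only [hS]; linarith
  have hS0 : 0 < S := lt_of_lt_of_le one_pos hS1
  have hcoeffD : P.coeff D = 1 := by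
    have := hmonic.coeff_natDegree
    rwa [hdeg] at this
  have heval : ∀ w : ℂ, P.eval w
      = (∑ i ∈ Finset.range D, P.coeff i * w ^ i) + w ^ D := by
    intro w
    rw [Polynomial.eval_eq_sum_range, hdeg, Finset.sum_range_succ, hcoeffD, one_mul]
  -- upper bound
  have hupper : ∀ w : ℂ, ‖P.eval w‖ ≤ S * max (‖w‖) 1 ^ D := by
    intro w
    set M : ℝ := max (‖w‖) 1 with hM
    have hM1 : 1 ≤ M := le_max_right _ _
    have hM0 : 0 ≤ M := le_trans zero_le_one hM1
    have hwM : ‖w‖ ≤ M := le_max_left _ _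
    have hpow : ∀ i, i ≤ D → ‖w‖ ^ i ≤ M ^ D := by
      intro i hi
      calc ‖w‖ ^ i ≤ M ^ i := pow_le_pow_left₀ (norm_nonneg _) hwM i
        _ ≤ M ^ D := pow_le_pow_right₀ hM1 hi
    calc ‖P.eval w‖
        ≤ ‖∑ i ∈ Finset.range D, P.coeff i * w ^ i‖ + ‖w ^ D‖ := by
          rw [heval w]; exact norm_add_le _ _
      _ ≤ (∑ i ∈ Finset.range D, ‖P.coeff i‖ * ‖w‖ ^ i) + M ^ D := by
          gcongr
          · calc ‖∑ i ∈ Finset.range D, P.coeff i * w ^ i‖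
                ≤ ∑ i ∈ Finset.range D, ‖P.coeff i * w ^ i‖ :=
                  norm_sum_le _ _
              _ = ∑ i ∈ Finset.range D, ‖P.coeff i‖ * ‖w‖ ^ i := by
                  simp [map_mul, map_pow]
          · rw [norm_pow]
            exact hpow D le_rfl
      _ ≤ (∑ i ∈ Finset.range D, ‖P.coeff i‖ * M ^ D) + M ^ D := by
          gcongr with i hi
          exact hpow i (Finset.mem_range.mp hi).le
      _ = S * M ^ D := by rw [← Finset.sum_mul, hS]; ring
  -- lower bound for large w
  have hlower : ∀ w : ℂ, 2 * S ≤ ‖w‖ →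
      ‖w‖ ^ D / 2 ≤ ‖P.eval w‖ := by
    intro w hw
    have hw1 : (1 : ℝ) ≤ ‖w‖ := by nlinarith
    have hw0 : (0 : ℝ) ≤ ‖w‖ := by linarith
    have hQ : ‖∑ i ∈ Finset.range D, P.coeff i * w ^ i‖
        ≤ T * ‖w‖ ^ (D - 1) := by
      calc ‖∑ i ∈ Finset.range D, P.coeff i * w ^ i‖
          ≤ ∑ i ∈ Finset.range D, ‖P.coeff i‖ * ‖w‖ ^ i := by
            refine le_trans (norm_sum_le _ _) (le_of_eq ?_)
            simp [map_mul, map_pow]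
        _ ≤ ∑ i ∈ Finset.range D, ‖P.coeff i‖ * ‖w‖ ^ (D - 1) := by
            gcongr with i hi
            exact Nat.le_sub_one_of_lt (Finset.mem_range.mp hi)
        _ = T * ‖w‖ ^ (D - 1) := by rw [← Finset.sum_mul]
    have hsplit : ‖w‖ ^ D
        ≤ ‖P.eval w‖ + T * ‖w‖ ^ (D - 1) := by
      have hwd : (w : ℂ) ^ D = P.eval w - ∑ i ∈ Finset.range D, P.coeff i * w ^ i := by
        rw [heval w]; ring
      calc ‖w‖ ^ D = ‖w ^ D‖ := by rw [norm_pow]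
        _ ≤ ‖P.eval w‖ + ‖∑ i ∈ Finset.range D, P.coeff i * w ^ i‖ := by
            rw [hwd]
            simpa using
              norm_sub_le (P.eval w) (∑ i ∈ Finset.range D, P.coeff i * w ^ i)
        _ ≤ ‖P.eval w‖ + T * ‖w‖ ^ (D - 1) := by gcongr
    have hDsplit : ‖w‖ ^ D = ‖w‖ ^ (D - 1) * ‖w‖ := by
      rw [← pow_succ, Nat.sub_add_cancel (le_trans one_le_two hD)]
    have hpow0 : (0 : ℝ) ≤ ‖w‖ ^ (D - 1) := pow_nonneg hw0 _
    have hhalf : T * ‖w‖ ^ (D - 1) ≤ ‖w‖ ^ D / 2 := by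
      rw [hDsplit]
      have hTw : T ≤ ‖w‖ / 2 := by nlinarith
      nlinarith
    linarith
  refine ⟨Real.log S + Real.log 2 + D * Real.log (2 * S), ?_, ?_⟩
  · have h1 := Real.log_nonneg hS1
    have h2 := Real.log_nonneg (by norm_num : (1:ℝ) ≤ 2)
    have h3 := Real.log_nonneg (by linarith : (1:ℝ) ≤ 2 * S)
    positivity
  intro w
  set M : ℝ := max (‖w‖) 1 with hM
  have hM1 : 1 ≤ M := le_max_right _ _
  have hM0 : 0 < M := lt_of_lt_of_le one_pos hM1
  rw [logplus_eq _ (norm_nonneg _), logplus_eq _ (norm_nonneg _), ← hM]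
  have hlogM0 : 0 ≤ Real.log M := Real.log_nonneg hM1
  have hlogP0 : 0 ≤ Real.log (max (‖P.eval w‖) 1) :=
    Real.log_nonneg (le_max_right _ _)
  have hup : Real.log (max (‖P.eval w‖) 1)
      ≤ Real.log S + (D : ℝ) * Real.log M := by
    have h1 : max (‖P.eval w‖) 1 ≤ S * M ^ D := by
      apply max_le (hupper w)
      calc (1:ℝ) = 1 * 1 := (one_mul 1).symm
        _ ≤ S * M ^ D :=
            mul_le_mul hS1 (one_le_pow₀ hM1) zero_le_one (le_of_lt hS0)
    calc Real.log (max (‖P.eval w‖) 1) ≤ Real.log (S * M ^ D) :=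
        Real.log_le_log (lt_of_lt_of_le one_pos (le_max_right _ _)) h1
      _ = Real.log S + (D : ℝ) * Real.log M := by
          rw [Real.log_mul (ne_of_gt hS0) (by positivity), Real.log_pow]
  have hlo : (D : ℝ) * Real.log M - Real.log (max (‖P.eval w‖) 1)
      ≤ Real.log 2 + (D : ℝ) * Real.log (2 * S) := by
    rcases le_or_gt (‖w‖) (2 * S) with hcase | hcase
    · have hMle : M ≤ 2 * S := max_le hcase (by linarith)
      have hlog : Real.log M ≤ Real.log (2 * S) := Real.log_le_log hM0 hMle
      have hD0 : (0:ℝ) ≤ D := Nat.cast_nonneg D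
      have h2 := Real.log_nonneg (by norm_num : (1:ℝ) ≤ 2)
      nlinarith
    · have hlow := hlower w hcase.le
      have hw1 : (1 : ℝ) ≤ ‖w‖ := by nlinarith
      have hMw : M = ‖w‖ := max_eq_left hw1
      have hpos : (0:ℝ) < ‖w‖ ^ D / 2 := by positivity
      have h1 : Real.log (‖w‖ ^ D / 2)
          ≤ Real.log (max (‖P.eval w‖) 1) :=
        Real.log_le_log hpos (le_trans hlow (le_max_left _ _))
      have h2 : Real.log (‖w‖ ^ D / 2)
          = (D : ℝ) * Real.log (‖w‖) - Real.log 2 := by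
        rw [Real.log_div (by positivity) two_ne_zero, Real.log_pow]
      have hD0 : (0:ℝ) ≤ D := Nat.cast_nonneg D
      have h3 := Real.log_nonneg (by linarith : (1:ℝ) ≤ 2 * S)
      rw [hMw]
      nlinarith
  rw [abs_le]
  have h1 := Real.log_nonneg hS1
  have h3 := Real.log_nonneg (by linarith : (1:ℝ) ≤ 2 * S)
  have h2 := Real.log_nonneg (by norm_num : (1:ℝ) ≤ 2)
  have hD0 : (0:ℝ) ≤ D := Nat.cast_nonneg D
  have h4 : 0 ≤ (D:ℝ) * Real.log (2 * S) := mul_nonneg hD0 h3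
  constructor
  · linarith
  · linarith

/-- The Green's function of a monic polynomial of degree `D ≥ 2`
is continuous on `ℂ`. -/
theorem green_function_continuous (D : ℕ) (hD : 2 ≤ D) (P : Polynomial ℂ)
    (hmonic : P.Monic) (hdeg : P.natDegree = D) (G : ℂ → ℝ)
    (hG : ∀ z : ℂ, Tendsto (fun n : ℕ =>
        (1 / (D : ℝ) ^ n) *
          max (Real.log (‖(fun w => P.eval w)^[n] z‖)) 0)
      atTop (𝓝 (G z))) :
    Continuous G := by
  obtain ⟨C, hC0, hC⟩ := key_estimate D hD P hmonic hdeg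
  set g : ℕ → ℂ → ℝ := fun n z =>
    (1 / (D : ℝ) ^ n) * max (Real.log (‖(fun w => P.eval w)^[n] z‖)) 0 with hg
  have hD2 : (2 : ℝ) ≤ (D : ℝ) := by exact_mod_cast hD
  have hDpos : (0 : ℝ) < (D : ℝ) := by linarith
  -- continuity of each g n
  have hgcont : ∀ n, Continuous (g n) := by
    intro n
    have hfun : g n = fun z =>
        (1 / (D : ℝ) ^ n) * Real.log (max (‖(fun w => P.eval w)^[n] z‖) 1) := by
      funext z
      simp only [hg, logplus_eq _ (norm_nonneg _)]
    rw [hfun]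
    have hiter : Continuous fun z : ℂ => (fun w => P.eval w)^[n] z :=
      (P.continuous).iterate n
    refine continuous_const.mul (Continuous.log ?_ ?_)
    · exact (continuous_norm.comp hiter).max continuous_const
    · intro z
      exact ne_of_gt (lt_of_lt_of_le one_pos (le_max_right _ _))
  -- one-step bound
  have hstep : ∀ n (z : ℂ), |g (n+1) z - g n z| ≤ C * (1/2 : ℝ) ^ (n+1) := by
    intro n z
    set u := (fun w => P.eval w)^[n] z with hu
    have hiter : (fun w => P.eval w)^[n+1] z = P.eval u :=
      Function.iterate_succ_apply' _ _ _
    have hDne : ((D:ℝ)^(n+1)) ≠ 0 := by positivity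
    have hdiff : g (n+1) z - g n z
        = (1/(D:ℝ)^(n+1)) * (max (Real.log (‖P.eval u‖)) 0
            - (D:ℝ) * max (Real.log (‖u‖)) 0) := by
      simp only [hg, hiter, ← hu]
      field_simp
      ring
    rw [hdiff, abs_mul, abs_of_pos (by positivity : (0:ℝ) < 1/(D:ℝ)^(n+1))]
    have h2D : (2:ℝ)^(n+1) ≤ (D:ℝ)^(n+1) := pow_le_pow_left₀ (by norm_num) hD2 _
    calc (1/(D:ℝ)^(n+1)) * |max (Real.log (‖P.eval u‖)) 0
            - (D:ℝ) * max (Real.log (‖u‖)) 0|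
        ≤ (1/(2:ℝ)^(n+1)) * C := by
          apply mul_le_mul _ (hC u) (abs_nonneg _) (by positivity)
          exact one_div_le_one_div_of_le (by positivity) h2D
      _ = C * (1/2 : ℝ) ^ (n+1) := by rw [one_div_pow]; ring
  -- Cauchy-type bound
  have hcauchy : ∀ n m (z : ℂ),
      |g (n+m) z - g n z| ≤ C * ((1/2:ℝ)^n - (1/2:ℝ)^(n+m)) := by
    intro n m z
    induction m with
    | zero => simp
    | succ m ih =>
      have h1 := hstep (n+m) z
      have key : C / 2^(n+m+1) + C * (1/2^n - 1/2^(n+m)) = C * (1/2^n - 1/2^(n+m+1)) := by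
        rw [pow_succ (2:ℝ) (n+m)]
        field_simp
        ring
      calc |g (n+(m+1)) z - g n z|
          ≤ |g (n+(m+1)) z - g (n+m) z| + |g (n+m) z - g n z| := abs_sub_le _ _ _
        _ ≤ C * (1/2:ℝ)^(n+m+1) + C * ((1/2:ℝ)^n - (1/2:ℝ)^(n+m)) := by
            exact add_le_add h1 ih
        _ = C * ((1/2:ℝ)^n - (1/2:ℝ)^(n+(m+1))) := by
            simp only [one_div_pow, ← Nat.add_assoc] at *
            rw [← key]
            ring
  -- limit bound
  have hGbound : ∀ n (z : ℂ), |G z - g n z| ≤ C * (1/2:ℝ)^n := by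
    intro n z
    have h1 : Tendsto (fun m => g (m + n) z) atTop (𝓝 (G z)) :=
      (hG z).comp (tendsto_add_atTop_nat n)
    have hto : Tendsto (fun m => |g (m+n) z - g n z|) atTop (𝓝 |G z - g n z|) :=
      (h1.sub tendsto_const_nhds).abs
    refine le_of_tendsto hto (Filter.Eventually.of_forall fun m => ?_)
    rw [Nat.add_comm m n]
    refine le_trans (hcauchy n m z) ?_
    have hp : (0:ℝ) ≤ (1/2:ℝ)^(n+m) := by positivity
    nlinarith
  -- uniform convergence
  have huniform : TendstoUniformly g G atTop := by
    rw [Metric.tendstoUniformly_iff]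
    intro ε hε
    have hto : Tendsto (fun n : ℕ => C * (1/2:ℝ)^n) atTop (𝓝 0) := by
      simpa using
        (tendsto_pow_atTop_nhds_zero_of_lt_one (by norm_num) (by norm_num : (1/2:ℝ) < 1)).const_mul C
    filter_upwards [hto.eventually_lt_const hε] with n hn z
    rw [Real.dist_eq]
    exact lt_of_le_of_lt (hGbound n z) hn
  exact huniform.continuous (Filter.Eventually.of_forall hgcont).frequently
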